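/- For every pointed Kripke model (M,s), every k ∈ ℕ, and every finite P ⊆ 𝒫, there exists a unique d-canonical formula δ ∈ D^P_k such that M,s ⊨ δ. -/

import Mathlib

/-!
Common framework: multi-agent epistemic modal logic with distributed knowledge.
Agents are `Fin n`, atoms are natural numbers.
-/

namespace DKLogic

/-- Formulas of the language `L_D`: atoms, negation, conjunction, disjunction and the
distributed-knowledge modality `D_B` for nonempty sets `B` of agents (together with the
constants `⊤`/`⊥`, which the paper uses as the empty conjunction/disjunction). -/
inductive Formula (n : ℕ) : Type
  | top : Formula n
  | bot : Formula n
  | atom : ℕ → Formula n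
  | neg : Formula n → Formula n
  | and : Formula n → Formula n → Formula n
  | or : Formula n → Formula n → Formula n
  | D : {B : Finset (Fin n) // B.Nonempty} → Formula n → Formula n

namespace Formula

/-- Modal depth of a formula. -/
def depth {n : ℕ} : Formula n → ℕ
  | top => 0
  | bot => 0
  | atom _ => 0
  | neg φ => depth φ
  | and φ ψ => max (depth φ) (depth ψ)
  | or φ ψ => max (depth φ) (depth ψ)
  | D _ φ => depth φ + 1

/-- The atoms occurring in a formula. -/
def atoms {n : ℕ} : Formula n → Finset ℕ
  | top => ∅
  | bot => ∅
  | atom q => {q}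
  | neg φ => atoms φ
  | and φ ψ => atoms φ ∪ atoms ψ
  | or φ ψ => atoms φ ∪ atoms ψ
  | D _ φ => atoms φ

end Formula

/-- A Kripke model over world type `W` with `n` agents. -/
structure KModel (n : ℕ) (W : Type) where
  R : Fin n → W → W → Prop
  V : W → Set ℕ

/-- The distributed accessibility relation `R_B = ⋂_{i ∈ B} R_i`. -/
def KModel.RB {n : ℕ} {W : Type} (M : KModel n W) (B : Finset (Fin n)) (s t : W) : Prop :=
  ∀ i ∈ B, M.R i s t

/-- Satisfaction. -/
def Sat {n : ℕ} {W : Type} (M : KModel n W) : W → Formula n → Prop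
  | _, .top => True
  | _, .bot => False
  | s, .atom q => q ∈ M.V s
  | s, .neg φ => ¬ Sat M s φ
  | s, .and φ ψ => Sat M s φ ∧ Sat M s ψ
  | s, .or φ ψ => Sat M s φ ∨ Sat M s ψ
  | s, .D B φ => ∀ t : W, M.RB B.1 s t → Sat M t φ

/-- Seriality of a relation. -/
def Serial {W : Type} (R : W → W → Prop) : Prop := ∀ x, ∃ y, R x y

/-- Euclideanness of a relation. -/
def Euclidean {W : Type} (R : W → W → Prop) : Prop := ∀ x y z, R x y → R x z → R y z

/-- The six modal systems. -/
inductive MSys : Type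
  | K | D | T | K45 | KD45 | S5

/-- `L`-models: frame conditions on each accessibility relation for each system. -/
def IsModel {n : ℕ} {W : Type} : MSys → KModel n W → Prop
  | .K, _ => True
  | .D, M => ∀ i, Serial (M.R i)
  | .T, M => ∀ i, Reflexive (M.R i)
  | .K45, M => ∀ i, Transitive (M.R i) ∧ Euclidean (M.R i)
  | .KD45, M => ∀ i, Serial (M.R i) ∧ Transitive (M.R i) ∧ Euclidean (M.R i)
  | .S5, M => ∀ i, Reflexive (M.R i) ∧ Transitive (M.R i) ∧ Euclidean (M.R i)

/-- Semantic consequence over `L`-models. -/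
def Entails {n : ℕ} (L : MSys) (φ ψ : Formula n) : Prop :=
  ∀ (W : Type) (M : KModel n W), IsModel L M → ∀ s : W, Sat M s φ → Sat M s ψ

/-- Semantic equivalence over `L`-models. -/
def EquivL {n : ℕ} (L : MSys) (φ ψ : Formula n) : Prop :=
  Entails L φ ψ ∧ Entails L ψ φ

/-- `L`-satisfiability. -/
def SatL {n : ℕ} (L : MSys) (φ : Formula n) : Prop :=
  ∃ (W : Type) (M : KModel n W) (s : W), IsModel L M ∧ Sat M s φ

/-- Collective `p`-bisimulation between two pointed models. -/
def CollPBisim {n : ℕ} {W W' : Type} (M : KModel n W) (s : W) (M' : KModel n W') (s' : W')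
    (p : ℕ) : Prop :=
  ∃ ρ : W → W' → Prop, ρ s s' ∧
    ∀ u u', ρ u u' →
      ((∀ q : ℕ, q ≠ p → (q ∈ M.V u ↔ q ∈ M'.V u')) ∧
       (∀ B : Finset (Fin n), B.Nonempty → ∀ v, M.RB B u v → ∃ v', M'.RB B u' v' ∧ ρ v v') ∧
       (∀ B : Finset (Fin n), B.Nonempty → ∀ v', M'.RB B u' v' → ∃ v, M.RB B u v ∧ ρ v v'))

/-- `ψ` is a result of forgetting `p` in `φ` in system `L`
(written `dforget_L(φ,p) ≡_L ψ` in the paper). -/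
def IsForget {n : ℕ} (L : MSys) (φ : Formula n) (p : ℕ) (ψ : Formula n) : Prop :=
  ψ.atoms ⊆ φ.atoms.erase p ∧
  (∀ (W W' : Type) (M : KModel n W) (M' : KModel n W') (s : W) (s' : W'),
      IsModel L M → IsModel L M' → Sat M s φ → CollPBisim M s M' s' p → Sat M' s' ψ) ∧
  (∀ (W' : Type) (M' : KModel n W') (s' : W'),
      IsModel L M' → Sat M' s' ψ →
      ∃ (W : Type) (M : KModel n W) (s : W), IsModel L M ∧ Sat M s φ ∧ CollPBisim M s M' s' p)

/-- `L` is closed under forgetting: `dforget_L(φ,p)` exists (as an `L`-satisfiable formula)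
for every `L`-satisfiable `φ` and every atom `p`. -/
def ClosedUnderForgetting {n : ℕ} (L : MSys) : Prop :=
  ∀ (φ : Formula n) (p : ℕ), SatL L φ → ∃ ψ : Formula n, SatL L ψ ∧ IsForget L φ p ψ

/-- `ψ` is a uniform interpolant of `φ` in `L` over `P \ {p}`. -/
def IsUI {n : ℕ} (L : MSys) (P : Finset ℕ) (p : ℕ) (φ ψ : Formula n) : Prop :=
  SatL L ψ ∧ ψ.atoms ⊆ P.erase p ∧
  ∀ χ : Formula n, p ∉ χ.atoms → (Entails L φ χ ↔ Entails L ψ χ)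

/-- The uniform interpolation property for the system `L`. -/
def HasUIP {n : ℕ} (L : MSys) : Prop :=
  ∀ (P : Finset ℕ) (p : ℕ) (φ : Formula n),
    p ∈ P → φ.atoms ⊆ P → SatL L φ → ∃ ψ : Formula n, IsUI L P p φ ψ

/-! ### Canonical formulas -/

/-- Big conjunction of a list of formulas (`⊤` for the empty list). -/
def bigAnd {n : ℕ} : List (Formula n) → Formula n
  | [] => .top
  | φ :: l => .and φ (bigAnd l)

/-- Big disjunction of a list of formulas (`⊥` for the empty list). -/
def bigOr {n : ℕ} : List (Formula n) → Formula n
  | [] => .bot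
  | φ :: l => .or φ (bigOr l)

/-- An injective numerical code of formulas, used to fix a canonical ordering. -/
def fcode {n : ℕ} : Formula n → ℕ
  | .top => Nat.pair 0 0
  | .bot => Nat.pair 1 0
  | .atom q => Nat.pair 2 q
  | .neg φ => Nat.pair 3 (fcode φ)
  | .and φ ψ => Nat.pair 4 (Nat.pair (fcode φ) (fcode ψ))
  | .or φ ψ => Nat.pair 5 (Nat.pair (fcode φ) (fcode ψ))
  | .D B φ => Nat.pair 6 (Nat.pair (B.1.sum fun i => 2 ^ (i : ℕ)) (fcode φ))

/-- Insert a formula into a strictly `fcode`-sorted list (dropping duplicates). -/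
def insertF {n : ℕ} (φ : Formula n) : List (Formula n) → List (Formula n)
  | [] => [φ]
  | ψ :: l =>
      if fcode φ < fcode ψ then φ :: ψ :: l
      else if fcode φ = fcode ψ then ψ :: l
      else ψ :: insertF φ l

/-- The canonical (sorted, duplicate-free) list representing the set of formulas in `l`. -/
def normList {n : ℕ} (l : List (Formula n)) : List (Formula n) := l.foldr insertF []

/-- The minterm of `P` that is positive exactly on `S`. -/
def minterm {n : ℕ} (P S : Finset ℕ) : Formula n :=
  bigAnd ((P.sort (· ≤ ·)).map fun q =>
    if q ∈ S then Formula.atom q else Formula.neg (Formula.atom q))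

/-- The subset of `Fin n` whose characteristic bits are those of `m`. -/
def natToFinset (n m : ℕ) : Finset (Fin n) :=
  Finset.univ.filter fun i => m.testBit (i : ℕ)

/-- A canonical enumeration of all nonempty subsets of the agent set. -/
def neSubsets (n : ℕ) : List {B : Finset (Fin n) // B.Nonempty} :=
  ((List.range (2 ^ n)).map (natToFinset n)).filterMap fun B =>
    if h : B.Nonempty then some ⟨B, h⟩ else none

/-- `∇_B Φ = D_B (⋁Φ) ∧ ⋀_{φ ∈ Φ} ¬ D_B ¬ φ`. -/
def nabla {n : ℕ} (B : {B : Finset (Fin n) // B.Nonempty}) (Φ : List (Formula n)) : Formula n :=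
  Formula.and (Formula.D B (bigOr Φ))
    (bigAnd (Φ.map fun φ => Formula.neg (Formula.D B (Formula.neg φ))))

/-- Underlying data of a d-canonical formula: a set of (positive) atoms together with,
for every set `B` of agents, a list of successor data. -/
inductive CData (n : ℕ) : Type
  | mk (S : Finset ℕ) (succ : Finset (Fin n) → List (CData n)) : CData n

/-- The positive-atom component. -/
def CData.S {n : ℕ} : CData n → Finset ℕ
  | mk S _ => S

/-- The `B`-successor data. -/
def CData.succ {n : ℕ} : CData n → Finset (Fin n) → List (CData n)
  | mk _ f => f

/-- The d-canonical formula of depth `k` over `P` determined by the data `d`: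
`δ_0 ∧ ⋀_{B} ∇_B Φ_B`. -/
def toFormula {n : ℕ} (P : Finset ℕ) : ℕ → CData n → Formula n
  | 0, d => minterm P (d.S ∩ P)
  | (k+1), d =>
      Formula.and (minterm P (d.S ∩ P))
        (bigAnd ((neSubsets n).map fun B =>
          nabla B (normList ((d.succ B.1).map fun c => toFormula P k c))))

/-- `D^P_k`: the set of d-canonical formulas of depth `k` over `P`. -/
def DP {n : ℕ} (P : Finset ℕ) (k : ℕ) : Set (Formula n) := Set.range (toFormula P k)

/-- `R_B(δ)` for `δ` the level-`k` canonical formula with data `d`: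
the set of `B`-successor canonical formulas (of level `k - 1`). -/
def RBset {n : ℕ} (P : Finset ℕ) (k : ℕ) (d : CData n) (B : Finset (Fin n)) :
    Set (Formula n) :=
  {φ | ∃ c ∈ d.succ B, φ = toFormula P (k - 1) c}

/-- One pruning step `δ ↦ δ^↓` on data (first argument: the level of the input). -/
def downD {n : ℕ} : ℕ → CData n → CData n
  | 0, d => d
  | 1, d => CData.mk d.S (fun _ => [])
  | (k+2), d => CData.mk d.S (fun B => (d.succ B).map fun c => downD (k+1) c)

/-- `l`-fold pruning `δ ↦ δ^{↓l}` on data (first argument: the level of the input). -/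
def downIter {n : ℕ} : ℕ → ℕ → CData n → CData n
  | _, 0, d => d
  | k, (l+1), d => downIter (k-1) l (downD k d)

/-- Truncation `δ ↦ δ^{↑l}` on data (first argument: the level of the input). -/
def upD {n : ℕ} : ℕ → ℕ → CData n → CData n
  | _, 0, d => CData.mk d.S (fun _ => [])
  | 0, (_+1), d => d
  | (k+1), (l+1), d => CData.mk d.S (fun B => (d.succ B).map fun c => upD k l c)

/-- The canonical formula `δ` of level `k` with data `d`. -/
def cf {n : ℕ} (P : Finset ℕ) (k : ℕ) (d : CData n) : Formula n := toFormula P k d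

/-- `δ^{↓l}` (a canonical formula of level `k - l`). -/
def cfDown {n : ℕ} (P : Finset ℕ) (k l : ℕ) (d : CData n) : Formula n :=
  toFormula P (k - l) (downIter k l d)

/-- `δ^{↑l}` (a canonical formula of level `min k l`). -/
def cfUp {n : ℕ} (P : Finset ℕ) (k l : ℕ) (d : CData n) : Formula n :=
  toFormula P (min k l) (upD k l d)

/-- Literal elimination: `φ^p` replaces every occurrence of `¬p` by `⊤` and subsequently
every remaining occurrence of `p` by `⊤`. -/
def elim {n : ℕ} (p : ℕ) : Formula n → Formula n
  | .top => .top
  | .bot => .bot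
  | .atom q => if q = p then .top else .atom q
  | .neg (.atom q) => if q = p then .top else .neg (.atom q)
  | .neg φ => .neg (elim p φ)
  | .and φ ψ => .and (elim p φ) (elim p ψ)
  | .or φ ψ => .or (elim p φ) (elim p ψ)
  | .D B φ => .D B (elim p φ)



section Proof3

open Classical

variable {n : ℕ}

lemma sat_bigAnd {W : Type} (M : KModel n W) (s : W) (l : List (Formula n)) :
    Sat M s (bigAnd l) ↔ ∀ φ ∈ l, Sat M s φ := by
  induction l with
  | nil => simp [bigAnd, Sat]
  | cons φ l ih => simp [bigAnd, Sat, ih]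

lemma sat_bigOr {W : Type} (M : KModel n W) (s : W) (l : List (Formula n)) :
    Sat M s (bigOr l) ↔ ∃ φ ∈ l, Sat M s φ := by
  induction l with
  | nil => simp [bigOr, Sat]
  | cons φ l ih => simp [bigOr, Sat, ih]

lemma sat_minterm {W : Type} (M : KModel n W) (s : W) (P S : Finset ℕ) :
    Sat M s (minterm (n := n) P S) ↔ ∀ q ∈ P, (q ∈ S ↔ q ∈ M.V s) := by
  rw [minterm, sat_bigAnd]
  constructor
  · intro h q hq
    have := h _ (List.mem_map_of_mem ((Finset.mem_sort _).2 hq))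
    by_cases hqS : q ∈ S <;> simp [hqS, Sat] at this ⊢ <;> tauto
  · intro h φ hφ
    obtain ⟨q, hq, rfl⟩ := List.mem_map.1 hφ
    have hq' := (Finset.mem_sort _).1 hq
    by_cases hqS : q ∈ S <;> simp only [hqS, if_true, if_false, Sat]
    · exact (h q hq').1 hqS
    · exact fun hv => hqS ((h q hq').2 hv)

lemma sat_nabla {W : Type} (M : KModel n W) (s : W) (B : {B : Finset (Fin n) // B.Nonempty})
    (Φ : List (Formula n)) :
    Sat M s (nabla B Φ) ↔
      ((∀ t, M.RB B.1 s t → ∃ φ ∈ Φ, Sat M t φ) ∧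
        ∀ φ ∈ Φ, ∃ t, M.RB B.1 s t ∧ Sat M t φ) := by
  simp only [nabla, Sat, sat_bigAnd, sat_bigOr, List.mem_map, forall_exists_index, and_imp]
  constructor
  · rintro ⟨h1, h2⟩
    refine ⟨h1, fun φ hφ => ?_⟩
    have := h2 _ φ hφ rfl
    simp only [Sat, not_forall, not_not] at this
    obtain ⟨t, ht, hst⟩ := this
    exact ⟨t, ht, hst⟩
  · rintro ⟨h1, h2⟩
    refine ⟨h1, fun _ φ hφ h => ?_⟩
    subst h
    obtain ⟨t, ht, hst⟩ := h2 φ hφ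
    simp only [Sat, not_forall, not_not]
    exact ⟨t, ht, hst⟩

lemma sum_two_pow_inj {B C : Finset (Fin n)}
    (h : (B.sum fun i => 2 ^ (i : ℕ)) = C.sum fun i => 2 ^ (i : ℕ)) : B = C := by
  have h2 : ∑ i ∈ B.image Fin.val, 2 ^ i = ∑ i ∈ C.image Fin.val, 2 ^ i := by
    rw [Finset.sum_image fun x _ y _ hxy => Fin.val_injective hxy,
        Finset.sum_image fun x _ y _ hxy => Fin.val_injective hxy]
    exact h
  have h3 := Finset.geomSum_injective (le_refl 2) h2
  exact Finset.image_injective Fin.val_injective h3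

lemma fcode_inj : ∀ φ ψ : Formula n, fcode φ = fcode ψ → φ = ψ := by
  intro φ
  induction φ with
  | top =>
    intro ψ h; cases ψ <;> simp [fcode, Nat.pair_eq_pair] at h
    rfl
  | bot =>
    intro ψ h; cases ψ <;> simp [fcode, Nat.pair_eq_pair] at h
    rfl
  | atom q =>
    intro ψ h; cases ψ <;> simp [fcode, Nat.pair_eq_pair] at h
    rw [h]
  | neg φ ih =>
    intro ψ h; cases ψ <;> simp [fcode, Nat.pair_eq_pair] at h
    case neg ψ' => rw [ih _ h]
  | and φ1 φ2 ih1 ih2 =>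
    intro ψ h; cases ψ <;> simp [fcode, Nat.pair_eq_pair] at h
    case and ψ1 ψ2 => rw [ih1 _ h.1, ih2 _ h.2]
  | or φ1 φ2 ih1 ih2 =>
    intro ψ h; cases ψ <;> simp [fcode, Nat.pair_eq_pair] at h
    case or ψ1 ψ2 => rw [ih1 _ h.1, ih2 _ h.2]
  | D B φ ih =>
    intro ψ h; cases ψ <;> simp [fcode, Nat.pair_eq_pair] at h
    case D B' ψ' =>
      obtain ⟨h1, h2⟩ := h
      have hB : B = B' := Subtype.ext (sum_two_pow_inj h1)
      rw [hB, ih _ h2]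

/-- The strict order on formulas induced by `fcode`. -/
def FLt (a b : Formula n) : Prop := fcode a < fcode b

instance : IsIrrefl (Formula n) (FLt (n := n)) := ⟨fun _ => lt_irrefl _⟩

instance : IsAntisymm (Formula n) (FLt (n := n)) :=
  ⟨fun _ _ h h' => absurd h' (lt_asymm h)⟩

lemma mem_insertF {φ x : Formula n} {l : List (Formula n)} :
    x ∈ insertF φ l ↔ x = φ ∨ x ∈ l := by
  induction l with
  | nil => simp [insertF]
  | cons ψ l ih =>
    rw [insertF]
    split_ifs with h1 h2
    · simp
    · have hφψ : φ = ψ := fcode_inj _ _ h2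
      subst hφψ
      simp only [List.mem_cons]
      tauto
    · simp only [List.mem_cons, ih]
      tauto

lemma insertF_sorted {φ : Formula n} {l : List (Formula n)} (h : l.Pairwise (FLt (n := n))) :
    (insertF φ l).Pairwise (FLt (n := n)) := by
  induction l with
  | nil => simp [insertF]
  | cons ψ l ih =>
    rw [List.pairwise_cons] at h
    rw [insertF]
    split_ifs with h1 h2
    · rw [List.pairwise_cons]
      refine ⟨fun b hb => ?_, List.pairwise_cons.2 h⟩
      rcases List.mem_cons.1 hb with rfl | hb
      · exact h1
      · exact lt_trans h1 (h.1 b hb)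
    · exact List.pairwise_cons.2 h
    · rw [List.pairwise_cons]
      refine ⟨fun b hb => ?_, ih h.2⟩
      rcases mem_insertF.1 hb with rfl | hb
      · exact lt_of_le_of_ne (le_of_not_gt h1) fun hc => h2 hc.symm
      · exact h.1 b hb

lemma normList_sorted (l : List (Formula n)) : (normList l).Pairwise (FLt (n := n)) := by
  induction l with
  | nil => exact List.Pairwise.nil
  | cons φ l ih => exact insertF_sorted ih

lemma mem_normList {x : Formula n} {l : List (Formula n)} : x ∈ normList l ↔ x ∈ l := by
  induction l with
  | nil => simp [normList]
  | cons φ l ih =>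
    show x ∈ insertF φ (normList l) ↔ _
    rw [mem_insertF, ih, List.mem_cons]

lemma normList_eq_of_mem_iff {l l' : List (Formula n)}
    (h : ∀ x, x ∈ normList l ↔ x ∈ normList l') : normList l = normList l' :=
  List.Perm.eq_of_pairwise (fun _ _ _ _ h1 h2 => absurd h2 (lt_asymm h1))
    (normList_sorted l) (normList_sorted l')
    ((List.perm_ext_iff_of_nodup (normList_sorted l).nodup (normList_sorted l').nodup).2 h)

end Proof3
section Proof3b

open Classical

variable {n : ℕ}

lemma mem_neSubsets (B : {B : Finset (Fin n) // B.Nonempty}) : B ∈ neSubsets n := by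
  have hinj : Function.Injective (fun m : Fin (2 ^ n) => natToFinset n m.val) := by
    intro a b hab
    apply Fin.ext
    apply Nat.eq_of_testBit_eq
    intro i
    by_cases hi : i < n
    · have := congrArg (fun S => (⟨i, hi⟩ : Fin n) ∈ S) hab
      simpa [natToFinset, Finset.mem_filter] using this
    · rw [Nat.testBit_lt_two_pow
        (lt_of_lt_of_le a.2 (Nat.pow_le_pow_right (by norm_num) (le_of_not_gt hi))),
        Nat.testBit_lt_two_pow
        (lt_of_lt_of_le b.2 (Nat.pow_le_pow_right (by norm_num) (le_of_not_gt hi)))]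
  have hbij : Function.Bijective (fun m : Fin (2 ^ n) => natToFinset n m.val) :=
    (Fintype.bijective_iff_injective_and_card _).2 ⟨hinj, by simp [Fintype.card_finset]⟩
  obtain ⟨m, hm⟩ := hbij.2 B.1
  rw [neSubsets]
  apply List.mem_filterMap.2
  refine ⟨B.1, List.mem_map.2 ⟨m.val, List.mem_range.2 m.2, hm⟩, ?_⟩
  rw [dif_pos B.2]

lemma range_toFormula_finite (P : Finset ℕ) :
    ∀ k, (Set.range (toFormula (n := n) P k)).Finite := by
  intro k
  induction k with
  | zero =>
    apply Set.Finite.subset (P.powerset.finite_toSet.image fun S => minterm (n := n) P S)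
    rintro _ ⟨d, rfl⟩
    exact ⟨d.S ∩ P, by simp, rfl⟩
  | succ k ih =>
    set NL : Set (List (Formula n)) :=
      normList '' {l : List (Formula n) | ∀ x ∈ l, x ∈ Set.range (toFormula (n := n) P k)}
      with hNLdef
    have hNL : NL.Finite := by
      apply Set.Finite.of_finite_image (f := List.toFinset)
      · apply Set.Finite.subset (ih.toFinset.powerset.finite_toSet)
        rintro _ ⟨_, ⟨l, hl, rfl⟩, rfl⟩
        show _ ∈ (↑(ih.toFinset.powerset) : Set (Finset (Formula n)))
        rw [Finset.mem_coe, Finset.mem_powerset]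
        intro a ha
        rw [List.mem_toFinset] at ha
        rw [Set.Finite.mem_toFinset]
        exact hl a (mem_normList.1 ha)
      · rintro _ ⟨l1, _, rfl⟩ _ ⟨l2, _, rfl⟩ heq
        apply normList_eq_of_mem_iff
        intro a
        rw [← List.mem_toFinset, heq, List.mem_toFinset]
    have hprod : (((↑P.powerset : Set (Finset ℕ)) ×ˢ
        (Set.pi Set.univ fun _ : {B : Finset (Fin n) // B.Nonempty} => NL))).Finite :=
      (P.powerset.finite_toSet).prod (Set.Finite.pi fun _ => hNL)
    apply Set.Finite.subset (hprod.image fun pr => Formula.and (minterm P pr.1)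
      (bigAnd ((neSubsets n).map fun B => nabla B (pr.2 B))))
    rintro _ ⟨d, rfl⟩
    refine ⟨⟨d.S ∩ P, fun B => normList ((d.succ B.1).map fun c => toFormula P k c)⟩,
      ⟨by simp, ?_⟩, rfl⟩
    intro B _
    refine ⟨(d.succ B.1).map fun c => toFormula P k c, ?_, rfl⟩
    intro x hx
    obtain ⟨c, _, rfl⟩ := List.mem_map.1 hx
    exact ⟨c, rfl⟩

end Proof3b
section Proof3c

open Classical

variable {n : ℕ}

/-- A choice function recovering data from a canonical formula. -/
noncomputable def pickData (P : Finset ℕ) (k : ℕ) (φ : Formula n) : CData n :=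
  if h : ∃ c : CData n, toFormula P k c = φ then h.choose else CData.mk ∅ fun _ => []

lemma pickData_spec {P : Finset ℕ} {k : ℕ} {φ : Formula n}
    (h : φ ∈ Set.range (toFormula (n := n) P k)) : toFormula P k (pickData P k φ) = φ := by
  obtain ⟨c, hc⟩ := h
  rw [pickData, dif_pos ⟨c, hc⟩]
  exact (⟨c, hc⟩ : ∃ c : CData n, toFormula P k c = φ).choose_spec

lemma exists_sat (P : Finset ℕ) {W : Type} (M : KModel n W) :
    ∀ (k : ℕ) (s : W), ∃ d : CData n, Sat M s (toFormula P k d) := by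
  intro k
  induction k with
  | zero =>
    intro s
    refine ⟨CData.mk (P.filter fun q => q ∈ M.V s) fun _ => [], ?_⟩
    rw [toFormula, sat_minterm]
    intro q hq
    simp [CData.S, Finset.mem_filter, hq]
  | succ k ih =>
    intro s
    choose g hg using ih
    have hfin := range_toFormula_finite (n := n) P k
    set T : Finset (Fin n) → Set (Formula n) :=
      fun B => (fun t => toFormula P k (g t)) '' {t | M.RB B s t} with hTdef
    have hTsub : ∀ B, T B ⊆ Set.range (toFormula (n := n) P k) := by
      rintro B _ ⟨t, _, rfl⟩; exact ⟨g t, rfl⟩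
    have hT : ∀ B, (T B).Finite := fun B => hfin.subset (hTsub B)
    refine ⟨CData.mk (P.filter fun q => q ∈ M.V s)
      (fun B => ((hT B).toFinset.toList).map (pickData P k)), ?_⟩
    rw [toFormula]
    refine ⟨?_, ?_⟩
    · rw [sat_minterm]
      intro q hq
      simp [CData.S, Finset.mem_filter, hq]
    · rw [sat_bigAnd]
      intro χ hχ
      obtain ⟨B, hB, rfl⟩ := List.mem_map.1 hχ
      rw [sat_nabla]
      have hmem : ∀ x : Formula n,
          x ∈ normList ((CData.succ (CData.mk (P.filter fun q => q ∈ M.V s)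
            (fun B => ((hT B).toFinset.toList).map (pickData P k))) B.1).map
              fun c => toFormula P k c) ↔ x ∈ T B.1 := by
        intro x
        rw [mem_normList, CData.succ, List.map_map]
        constructor
        · intro hx
          obtain ⟨φ, hφ, rfl⟩ := List.mem_map.1 hx
          rw [Finset.mem_toList, Set.Finite.mem_toFinset] at hφ
          rw [Function.comp_apply, pickData_spec (hTsub B.1 hφ)]
          exact hφ
        · intro hx
          refine List.mem_map.2 ⟨x, ?_, ?_⟩
          · rw [Finset.mem_toList, Set.Finite.mem_toFinset]; exact hx
          · rw [Function.comp_apply, pickData_spec (hTsub B.1 hx)]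
      constructor
      · intro t ht
        exact ⟨toFormula P k (g t), (hmem _).2 ⟨t, ht, rfl⟩, hg t⟩
      · intro φ hφ
        obtain ⟨t, ht, rfl⟩ := (hmem φ).1 hφ
        exact ⟨t, ht, hg t⟩

lemma sat_unique (P : Finset ℕ) {W : Type} (M : KModel n W) :
    ∀ (k : ℕ) (s : W) (d d' : CData n),
      Sat M s (toFormula P k d) → Sat M s (toFormula P k d') →
        toFormula P k d = toFormula P k d' := by
  intro k
  induction k with
  | zero =>
    intro s d d' hd hd'
    rw [toFormula] at *
    rw [sat_minterm] at hd hd'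
    congr 1
    ext q
    constructor
    · intro hq
      have hq2 := (Finset.mem_inter.1 hq).2
      exact (hd' q hq2).2 ((hd q hq2).1 hq)
    · intro hq
      have hq2 := (Finset.mem_inter.1 hq).2
      exact (hd q hq2).2 ((hd' q hq2).1 hq)
  | succ k ih =>
    intro s d d' hd hd'
    rw [toFormula] at hd hd' ⊢
    obtain ⟨hd0, hd1⟩ := hd
    obtain ⟨hd0', hd1'⟩ := hd'
    rw [sat_bigAnd] at hd1 hd1'
    congr 1
    · rw [sat_minterm] at hd0 hd0'
      congr 1
      ext q
      constructor
      · intro hq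
        have hq2 := (Finset.mem_inter.1 hq).2
        exact (hd0' q hq2).2 ((hd0 q hq2).1 hq)
      · intro hq
        have hq2 := (Finset.mem_inter.1 hq).2
        exact (hd0 q hq2).2 ((hd0' q hq2).1 hq)
    · congr 1
      apply List.map_congr_left
      intro B hB
      have h1 := hd1 _ (List.mem_map_of_mem hB)
      have h2 := hd1' _ (List.mem_map_of_mem hB)
      rw [sat_nabla] at h1 h2
      congr 1
      apply normList_eq_of_mem_iff
      have key : ∀ (c1 c2 : CData n),
          (∀ t, M.RB B.1 s t →
            ∃ φ ∈ normList ((c2.succ B.1).map fun c => toFormula P k c), Sat M t φ) →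
          (∀ φ ∈ normList ((c1.succ B.1).map fun c => toFormula P k c),
            ∃ t, M.RB B.1 s t ∧ Sat M t φ) →
          ∀ x, x ∈ normList ((c1.succ B.1).map fun c => toFormula P k c) →
            x ∈ normList ((c2.succ B.1).map fun c => toFormula P k c) := by
        intro c1 c2 hfwd hbwd x hx
        obtain ⟨t, ht, hxt⟩ := hbwd x hx
        obtain ⟨y, hy, hyt⟩ := hfwd t ht
        obtain ⟨cx, _, rfl⟩ := List.mem_map.1 (mem_normList.1 hx)
        obtain ⟨cy, _, hcy⟩ := List.mem_map.1 (mem_normList.1 hy)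
        rw [← hcy] at hyt
        rw [ih t cx cy hxt hyt, hcy]
        exact hy
      intro x
      exact ⟨key d d' h2.1 h1.2 x, key d' d h1.1 h2.2 x⟩

end Proof3c

/-- every pointed Kripke model satisfies a unique member of `D^P_k`. -/
theorem unique_canonical_of_model {n : ℕ} {W : Type} (M : KModel n W) (s : W)
    (k : ℕ) (P : Finset ℕ) :
    ∃! δ : Formula n, δ ∈ DP P k ∧ Sat M s δ := by
  obtain ⟨d, hd⟩ := exists_sat P M k s
  refine ⟨toFormula P k d, ⟨⟨d, rfl⟩, hd⟩, ?_⟩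
  rintro δ ⟨⟨d', rfl⟩, hδ⟩
  exact sat_unique P M k s d' d hδ hd

end DKLogic
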